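/- For polynomial G(p) = Σ_{k=0}^h p^k Γ_k, the block Loewner matrix 𝕃 satisfies rank(𝕃) ≤ Σ_{k=0}^h rank(Γ_k)·rank(Ξ_k), where Ξ_k is the block matrix whose (i,j)-th block is ((π_i^k − φ_j^k)/(π_i − φ_j))·𝟙_{m,n}. -/

import Mathlib

open Matrix

section Aux

variable {α β ι : Type*} [Fintype α] [Fintype β] [DecidableEq α] [DecidableEq β]

lemma matrix_rank_add_le (A B : Matrix α β ℝ) : (A + B).rank ≤ A.rank + B.rank := by
  have hr : LinearMap.range (A + B).mulVecLin ≤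
      LinearMap.range A.mulVecLin ⊔ LinearMap.range B.mulVecLin := by
    rw [Matrix.mulVecLin_add]
    rintro x ⟨y, rfl⟩
    exact Submodule.add_mem_sup (LinearMap.mem_range_self _ y) (LinearMap.mem_range_self _ y)
  calc (A + B).rank ≤ Module.finrank ℝ
        (LinearMap.range A.mulVecLin ⊔ LinearMap.range B.mulVecLin : Submodule ℝ (α → ℝ)) :=
        Submodule.finrank_mono hr
    _ ≤ A.rank + B.rank := Submodule.finrank_add_le_finrank_add_finrank _ _

lemma matrix_rank_sum_le (s : Finset ι) (f : ι → Matrix α β ℝ) :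
    (∑ i ∈ s, f i).rank ≤ ∑ i ∈ s, (f i).rank := by
  classical
  induction s using Finset.induction_on with
  | empty => simp [Matrix.rank_zero]
  | insert _ _ hi ih =>
    rw [Finset.sum_insert hi, Finset.sum_insert hi]
    exact le_trans (matrix_rank_add_le _ _) (Nat.add_le_add_left ih _)

/-- Rank factorization: any real matrix `A` factors as `C * R` with inner dimension `A.rank`. -/
lemma exists_rank_factorization (A : Matrix α β ℝ) :
    ∃ (C : Matrix α (Fin A.rank) ℝ) (R : Matrix (Fin A.rank) β ℝ), A = C * R := by
  classical
  set W := LinearMap.range A.mulVecLin with hW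
  have hrank : A.rank = Module.finrank ℝ W := rfl
  let b : Module.Basis (Fin (Module.finrank ℝ W)) ℝ W := Module.finBasis ℝ W
  have hmem : ∀ j, (fun i => A i j) ∈ W := by
    intro j
    refine ⟨Pi.single j 1, ?_⟩
    ext i
    simp [Matrix.mulVecLin_apply, Matrix.mulVec_single]
  refine ⟨Matrix.of (fun i s => (b (Fin.cast hrank s) : α → ℝ) i),
    Matrix.of (fun s j => b.repr ⟨fun i => A i j, hmem j⟩ (Fin.cast hrank s)), ?_⟩
  ext i j
  have hbs : (⟨fun i => A i j, hmem j⟩ : W) =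
      ∑ s, b.repr ⟨fun i => A i j, hmem j⟩ s • b s := (b.sum_repr _).symm
  have := congrArg (fun (w : W) => (w : α → ℝ) i) hbs
  simp only [Submodule.coe_sum, Submodule.coe_smul, Finset.sum_apply, Pi.smul_apply,
    smul_eq_mul] at this
  rw [Matrix.mul_apply]
  rw [show A i j = _ from this]
  rw [← (Fin.castOrderIso hrank).toEquiv.sum_comp]
  simp only [Matrix.of_apply]
  exact Finset.sum_congr rfl fun s _ => by rw [mul_comm]; rfl

lemma rank_factored_hadamard_le {r : ℕ} (C : Matrix α (Fin r) ℝ) (R : Matrix (Fin r) β ℝ)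
    (B : Matrix α β ℝ) : ((C * R) ⊙ B).rank ≤ r * B.rank := by
  have hdecomp : (C * R) ⊙ B =
      ∑ s : Fin r, Matrix.diagonal (fun i => C i s) * B * Matrix.diagonal (fun j => R s j) := by
    ext i j
    rw [Matrix.hadamard_apply, Matrix.mul_apply, Finset.sum_mul]
    simp only [Matrix.sum_apply]
    refine Finset.sum_congr rfl fun s _ => ?_
    rw [Matrix.mul_diagonal, Matrix.diagonal_mul]
    ring
  rw [hdecomp]
  calc (∑ s : Fin r, Matrix.diagonal (fun i => C i s) * B *
        Matrix.diagonal (fun j => R s j)).rank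
      ≤ ∑ s : Fin r, (Matrix.diagonal (fun i => C i s) * B *
        Matrix.diagonal (fun j => R s j)).rank := matrix_rank_sum_le _ _
    _ ≤ ∑ _s : Fin r, B.rank := Finset.sum_le_sum fun s _ =>
        le_trans (Matrix.rank_mul_le_left _ _)
          (Matrix.rank_mul_le_right _ _)
    _ = r * B.rank := by simp [Finset.sum_const, Nat.smul_one_eq_cast]

end Aux

/-- For polynomial `G p = ∑_{k=0}^h p^k • Γ k`, the block Loewner matrix `𝕃` satisfies
`rank 𝕃 ≤ ∑_{k=0}^h rank (Γ k) * rank (Ξ k)`, where `Ξ k` has `(i,j)`-th block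
`((π i ^ k - φ j ^ k) / (π i - φ j)) • 𝟙_{m,n}`. -/
theorem polynomial_loewner_rank_le (M N m n h : ℕ)
    (Γ : ℕ → Matrix (Fin m) (Fin n) ℝ) (π : Fin M → ℝ) (φ : Fin N → ℝ)
    (hπφ : ∀ i j, π i ≠ φ j)
    (L : Matrix (Fin M × Fin m) (Fin N × Fin n) ℝ)
    (Ξ : ℕ → Matrix (Fin M × Fin m) (Fin N × Fin n) ℝ)
    (hL : ∀ i j a b, L (i, a) (j, b) =
      (π i - φ j)⁻¹ * (((∑ k ∈ Finset.range (h + 1), π i ^ k • Γ k)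
        - ∑ k ∈ Finset.range (h + 1), φ j ^ k • Γ k) a b))
    (hΞ : ∀ k i j a b, Ξ k (i, a) (j, b) = (π i ^ k - φ j ^ k) / (π i - φ j)) :
    L.rank ≤ ∑ k ∈ Finset.range (h + 1), (Γ k).rank * (Ξ k).rank := by
  classical
  -- block-constant lift of Γ k
  set B : ℕ → Matrix (Fin M × Fin m) (Fin N × Fin n) ℝ :=
    fun k => (Γ k).submatrix Prod.snd Prod.snd with hB
  have hLsum : L = ∑ k ∈ Finset.range (h + 1), (B k) ⊙ (Ξ k) := by
    ext ⟨i, a⟩ ⟨j, b⟩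
    rw [hL]
    simp only [Matrix.sum_apply, Matrix.hadamard_apply, hΞ, hB, Matrix.submatrix_apply,
      Matrix.sub_apply, Matrix.smul_apply, smul_eq_mul]
    rw [← Finset.sum_sub_distrib, Finset.mul_sum]
    refine Finset.sum_congr rfl fun k _ => ?_
    rw [div_eq_inv_mul]
    ring
  rw [hLsum]
  calc (∑ k ∈ Finset.range (h + 1), (B k) ⊙ (Ξ k)).rank
      ≤ ∑ k ∈ Finset.range (h + 1), ((B k) ⊙ (Ξ k)).rank := matrix_rank_sum_le _ _
    _ ≤ ∑ k ∈ Finset.range (h + 1), (Γ k).rank * (Ξ k).rank := by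
        refine Finset.sum_le_sum fun k _ => ?_
        obtain ⟨C, R, hCR⟩ := exists_rank_factorization (Γ k)
        have hBk : B k = (C.submatrix Prod.snd id) * (R.submatrix id Prod.snd) := by
          ext ⟨i, a⟩ ⟨j, b⟩
          simp [hB, hCR, Matrix.mul_apply]
        rw [hBk]
        exact rank_factored_hadamard_le _ _ _
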